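/- Let X be a real normed vector space and K ⊆ X a closed, convex, pointed cone with nonempty interior, and fix e ∈ int K. If A ⊆ X is nonempty and weakly K-compact, then the Gerstewitz functional φ(x) = inf{t ∈ ℝ : x ∈ te − K} attains its minimum on A, i.e., there exists ā ∈ A with φ(ā) ≤ φ(a) for all a ∈ A. -/

import Mathlib

open Set Filter Topology Metric Pointwise

/-- A set is weakly open if it is open in the weak topology σ(X, X*). -/
def WeaklyOpen {X : Type*} [NormedAddCommGroup X] [NormedSpace ℝ X] (U : Set X) : Prop :=
  IsOpen ((toWeakSpace ℝ X) '' U)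

/-- `S` is weakly `K`-compact: every cover of `S` by sets `U + K` with `U` weakly open
admits a finite subcover. -/
def WeaklyKCompact {X : Type*} [NormedAddCommGroup X] [NormedSpace ℝ X] (K S : Set X) : Prop :=
  ∀ {ι : Type*} (U : ι → Set X), (∀ i, WeaklyOpen (U i)) → S ⊆ ⋃ i, (U i + K) →
    ∃ t : Finset ι, S ⊆ ⋃ i ∈ t, (U i + K)

/-- The Gerstewitz (Tammer) scalarizing functional `φ(x) = inf {t : x ∈ t • e - K}`. -/
noncomputable def gerstewitz {X : Type*} [NormedAddCommGroup X] [NormedSpace ℝ X]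
    (K : Set X) (e : X) (x : X) : ℝ := sInf {t : ℝ | t • e - x ∈ K}

/-- A sublevel-complement of the Gerstewitz functional is weakly open. -/
lemma weaklyOpen_aux {X : Type*} [NormedAddCommGroup X] [NormedSpace ℝ X]
    (K : Set X) (hK_closed : IsClosed K) (hK_conv : Convex ℝ K) (c : ℝ) (e : X) :
    WeaklyOpen {x : X | c • e - x ∉ K} := by
  have hKw : IsClosed (toWeakSpace ℝ X '' K) := by
    have h := hK_conv.toWeakSpace_closure (𝕜 := ℝ)
    rw [hK_closed.closure_eq] at h
    exact h ▸ isClosed_closure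
  unfold WeaklyOpen
  set Φ := toWeakSpace ℝ X with hΦ
  haveI : ContinuousSMul ℝ (WeakSpace ℝ X) :=
    WeakBilin.instContinuousSMul ((topDualPairing ℝ X).flip)
  have hgcont : Continuous (fun y : WeakSpace ℝ X => Φ (c • e) + (-1 : ℝ) • y) :=
    continuous_const.add (continuous_const.smul continuous_id)
  have hgx : ∀ x : X, Φ (c • e) + (-1 : ℝ) • (Φ x) = Φ (c • e - x) := by
    intro x
    rw [← map_smul Φ, ← map_add, neg_one_smul, ← sub_eq_add_neg]
  have himg : Φ '' {x : X | c • e - x ∉ K} =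
      (fun y : WeakSpace ℝ X => Φ (c • e) + (-1 : ℝ) • y) ⁻¹' (Φ '' K)ᶜ := by
    ext y
    obtain ⟨x, rfl⟩ := Φ.surjective y
    simp only [Set.mem_image, Set.mem_preimage, Set.mem_compl_iff, hgx]
    constructor
    · rintro ⟨x', hx', hx'x⟩
      have hxx : x' = x := Φ.injective hx'x
      subst hxx
      rintro ⟨k, hk, hkeq⟩
      exact hx' (Φ.injective hkeq ▸ hk)
    · intro hy
      refine ⟨x, fun hxK => hy ⟨_, hxK, rfl⟩, rfl⟩
  rw [himg]
  exact hKw.isOpen_compl.preimage hgcont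

/-- The Gerstewitz functional attains its minimum on a weakly `K`-compact set (Lemma 12). -/
theorem gerstewitz_attains_min {X : Type*} [NormedAddCommGroup X] [NormedSpace ℝ X]
    (K : Set X)
    (hK_closed : IsClosed K) (hK_conv : Convex ℝ K)
    (hK_cone : ∀ t : ℝ, 0 ≤ t → ∀ x ∈ K, t • x ∈ K)
    (hK_add : K + K ⊆ K) (hK_pointed : K ∩ (-K) = {0})
    (e : X) (he : e ∈ interior K)
    (A : Set X) (hA : A.Nonempty) (hAcomp : WeaklyKCompact K A) :
    ∃ abar ∈ A, ∀ a ∈ A, gerstewitz K e abar ≤ gerstewitz K e a := by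
  obtain ⟨ε, hε, hball⟩ := Metric.mem_nhds_iff.mp (mem_interior_iff_mem_nhds.mp he)
  by_cases he0 : e = 0
  · -- degenerate case: X is a subsingleton
    subst he0
    have hKuniv : K = univ := by
      ext x
      simp only [mem_univ, iff_true]
      by_cases hx : x = 0
      · exact hx ▸ hball (mem_ball_self hε)
      · have hxn : 0 < ‖x‖ := norm_pos_iff.mpr hx
        have hy : (ε / (2 * ‖x‖)) • x ∈ K := by
          apply hball
          rw [mem_ball_iff_norm, sub_zero, norm_smul, Real.norm_eq_abs,
            abs_of_pos (by positivity)]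
          rw [div_mul_eq_mul_div, mul_comm]
          rw [div_lt_iff₀ (by positivity)]
          nlinarith
        have := hK_cone (2 * ‖x‖ / ε) (by positivity) _ hy
        rwa [smul_smul, show (2 * ‖x‖ / ε) * (ε / (2 * ‖x‖)) = 1 by field_simp,
          one_smul] at this
    have hzero : ∀ x : X, x = 0 := by
      intro x
      have hx : x ∈ K ∩ (-K) := ⟨hKuniv ▸ mem_univ x, Set.mem_neg.mpr (hKuniv ▸ mem_univ (-x))⟩
      rw [hK_pointed] at hx
      exact hx
    obtain ⟨a0, ha0⟩ := hA
    exact ⟨a0, ha0, fun a ha => by rw [hzero a, hzero a0]⟩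
  · -- main case
    have heK : e ∈ K := interior_subset he
    have hnegE : -e ∉ K := by
      intro h
      apply he0
      have : e ∈ K ∩ (-K) := ⟨heK, Set.mem_neg.mpr h⟩
      rw [hK_pointed] at this
      exact this
    have h0K : (0 : X) ∈ K := by
      have := hK_cone 0 le_rfl e heK
      rwa [zero_smul] at this
    set S : X → Set ℝ := fun x => {t : ℝ | t • e - x ∈ K} with hS
    have hupset : ∀ x : X, ∀ t ∈ S x, ∀ s : ℝ, t ≤ s → s ∈ S x := by
      intro x t ht s hts
      have h1 : (s - t) • e ∈ K := hK_cone _ (by linarith) _ heK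
      have h2 := hK_add (Set.add_mem_add h1 ht)
      rwa [show (s - t) • e + (t • e - x) = s • e - x by rw [sub_smul]; abel] at h2
    have hne : ∀ x : X, (S x).Nonempty := by
      intro x
      set t : ℝ := ‖x‖ / ε + 1 with htdef
      have ht : 0 < t := by positivity
      have h1 : e - t⁻¹ • x ∈ Metric.ball e ε := by
        rw [mem_ball_iff_norm, show e - t⁻¹ • x - e = -(t⁻¹ • x) by abel, norm_neg,
          norm_smul, Real.norm_eq_abs, abs_of_pos (by positivity), ← div_eq_inv_mul,
          div_lt_iff₀ ht]
        have : ε * t = ‖x‖ + ε := by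
          rw [htdef, mul_add, mul_one, mul_div_assoc', mul_comm ε, mul_div_assoc, div_self hε.ne', mul_one]
        rw [this]
        linarith
      have h2 := hK_cone t ht.le _ (hball h1)
      rw [smul_sub, smul_inv_smul₀ ht.ne'] at h2
      exact ⟨t, h2⟩
    have hbdd : ∀ x : X, BddBelow (S x) := by
      intro x
      by_contra hnb
      have hall : ∀ t : ℝ, t ∈ S x := by
        intro t
        obtain ⟨t', ht'S, ht'lt⟩ := not_bddBelow_iff.mp hnb t
        exact hupset x t' ht'S t ht'lt.le
      have hmemn : ∀ n : ℕ, -e - ((n : ℝ) + 1)⁻¹ • x ∈ K := by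
        intro n
        have h1 : (-((n : ℝ) + 1)) ∈ S x := hall _
        have h2 := hK_cone ((n : ℝ) + 1)⁻¹ (by positivity) _ h1
        rw [smul_sub, smul_smul, show ((n : ℝ) + 1)⁻¹ * (-((n : ℝ) + 1)) = -1 by
          field_simp, neg_one_smul] at h2
        exact h2
      have hseq : Tendsto (fun n : ℕ => -e - ((n : ℝ) + 1)⁻¹ • x) atTop (𝓝 (-e)) := by
        have h0 : Tendsto (fun n : ℕ => ((n : ℝ) + 1)⁻¹) atTop (𝓝 0) := by
          have := tendsto_one_div_add_atTop_nhds_zero_nat (𝕜 := ℝ)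
          simpa [one_div] using this
        have h1 := (tendsto_const_nhds (x := -e)).sub (h0.smul_const x)
        simpa using h1
      exact hnegE (hK_closed.mem_of_tendsto hseq (Filter.Eventually.of_forall hmemn))
    have hSclosed : ∀ x : X, IsClosed (S x) :=
      fun x => hK_closed.preimage ((continuous_id.smul continuous_const).sub continuous_const)
    have hmem : ∀ (x : X) (t : ℝ), gerstewitz K e x ≤ t ↔ t ∈ S x := by
      intro x t
      constructor
      · intro h
        have hc : sInf (S x) ∈ S x := (hSclosed x).csInf_mem (hne x) (hbdd x)
        exact hupset x _ hc t h
      · intro h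
        exact csInf_le (hbdd x) h
    have hmono : ∀ u k : X, k ∈ K → gerstewitz K e u ≤ gerstewitz K e (u + k) := by
      intro u k hk
      have h1 : gerstewitz K e (u + k) ∈ S (u + k) := (hmem (u + k) _).mp le_rfl
      have h2 := hK_add (Set.add_mem_add h1 hk)
      rw [show (gerstewitz K e (u + k)) • e - (u + k) + k = (gerstewitz K e (u + k)) • e - u
        by abel] at h2
      exact (hmem u _).mpr h2
    by_contra hcon
    push_neg at hcon
    classical
    obtain ⟨t, ht⟩ := hAcomp
        (fun c : ULift ℝ => if ∃ a ∈ A, gerstewitz K e a ≤ c.down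
          then {x : X | c.down • e - x ∉ K} else ∅)
        (by
          intro c
          by_cases h : ∃ a ∈ A, gerstewitz K e a ≤ c.down
          · simpa only [if_pos h] using weaklyOpen_aux K hK_closed hK_conv c.down e
          · simp only [if_neg h]
            unfold WeaklyOpen
            simp)
        (by
          intro b hb
          obtain ⟨a, ha, hlt⟩ := hcon b hb
          refine Set.mem_iUnion.mpr ⟨⟨gerstewitz K e a⟩, ?_⟩
          refine ⟨b, ?_, 0, h0K, add_zero b⟩
          have hw : ∃ a' ∈ A, gerstewitz K e a' ≤ gerstewitz K e a := ⟨a, ha, le_rfl⟩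
          simp only [if_pos hw, Set.mem_setOf_eq]
          intro hbK
          exact absurd ((hmem b _).mpr hbK) (not_le.mpr hlt))
    set t' := t.filter (fun c => ∃ a ∈ A, gerstewitz K e a ≤ c.down) with ht'
    obtain ⟨a0, ha0A⟩ := hA
    have h := ht ha0A
    rw [Set.mem_iUnion₂] at h
    obtain ⟨c0, hc0t, hc0m⟩ := h
    obtain ⟨u0, hu0, k0, hk0, huk0⟩ := hc0m
    have hcond0 : ∃ a ∈ A, gerstewitz K e a ≤ c0.down := by
      by_contra hcond
      simp only [if_neg hcond, Set.mem_empty_iff_false] at hu0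
    have hc0t' : c0 ∈ t' := Finset.mem_filter.mpr ⟨hc0t, hcond0⟩
    obtain ⟨j, hjt', hjmin⟩ := Finset.exists_min_image t' (fun c => c.down) ⟨c0, hc0t'⟩
    obtain ⟨aj, hajA, haj⟩ := (Finset.mem_filter.mp hjt').2
    have h := ht hajA
    rw [Set.mem_iUnion₂] at h
    obtain ⟨c, hct, hcm⟩ := h
    obtain ⟨u, hu, k, hk, huk⟩ := hcm
    have hcond : ∃ a ∈ A, gerstewitz K e a ≤ c.down := by
      by_contra hcond
      simp only [if_neg hcond, Set.mem_empty_iff_false] at hu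
    simp only [if_pos hcond, Set.mem_setOf_eq] at hu
    have h1 : c.down < gerstewitz K e u := by
      by_contra hle
      exact hu ((hmem u c.down).mp (not_lt.mp hle))
    have h2 : gerstewitz K e u ≤ gerstewitz K e aj := huk ▸ hmono u k hk
    have h3 : j.down ≤ c.down := hjmin c (Finset.mem_filter.mpr ⟨hct, hcond⟩)
    linarith
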